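/- Let v_i : [0,k̄) → [0,∞) be a sequence of convex non-decreasing functions. Then there exists a subsequence, a point k₀ ∈ [0,k̄], and a function v₀ : [0,k̄) → [0,∞] such that along the subsequence v_i converges to v₀ pointwise, v₀ is real-valued on [0,k₀), v₀ = +∞ on (k₀,k̄), and the convergence is uniform on compact subsets of [0,k₀). -/

import Mathlib

open Set Filter Topology

private lemma equilip {kbar a b C : ℝ} (hb : 0 ≤ b) (hba : b < a) (hak : a < kbar)
    {f : ℝ → ℝ} (hconv : ConvexOn ℝ (Set.Ico 0 kbar) f)
    (hmono : MonotoneOn f (Set.Ico 0 kbar))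
    (hnn : ∀ k ∈ Set.Ico 0 kbar, 0 ≤ f k) (hC : f a ≤ C) :
    ∀ x ∈ Icc 0 b, ∀ y ∈ Icc 0 b, |f y - f x| ≤ C / (a - b) * |y - x| := by
  have ha0 : (0:ℝ) ≤ a := hb.trans hba.le
  have haS : a ∈ Ico 0 kbar := ⟨ha0, hak⟩
  have hC0 : 0 ≤ C := (hnn a haS).trans hC
  have hab : 0 < a - b := by linarith
  have key : ∀ x ∈ Icc 0 b, ∀ y ∈ Icc 0 b, x ≤ y → f y - f x ≤ C / (a - b) * (y - x) := by
    intro x hx y hy hxy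
    rcases eq_or_lt_of_le hxy with rfl | hlt
    · simp
    have hxS : x ∈ Ico 0 kbar := ⟨hx.1, by linarith [hx.2]⟩
    have hyS : y ∈ Ico 0 kbar := ⟨hy.1, by linarith [hy.2]⟩
    have hya : y < a := lt_of_le_of_lt hy.2 hba
    have hslope := hconv.slope_mono_adjacent hxS haS hlt hya
    have hay : 0 < a - y := by linarith
    have h1 : (f a - f y) / (a - y) ≤ C / (a - b) := by
      have h2 : f a - f y ≤ C := by linarith [hnn y hyS]
      calc (f a - f y) / (a - y) ≤ C / (a - y) := by
            exact div_le_div_of_nonneg_right h2 hay.le |>.trans_eq rfl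
          _ ≤ C / (a - b) := by
            apply div_le_div_of_nonneg_left hC0 hab (by linarith [hy.2])
    have := hslope.trans h1
    have hyx : 0 < y - x := by linarith
    calc f y - f x = (f y - f x) / (y - x) * (y - x) := by
          field_simp
      _ ≤ C / (a - b) * (y - x) := mul_le_mul_of_nonneg_right this hyx.le
  intro x hx y hy
  rcases le_total x y with h | h
  · rw [abs_of_nonneg (by linarith [hmono ⟨hx.1, by linarith [hx.2]⟩ ⟨hy.1, by linarith [hy.2]⟩ h]),
      abs_of_nonneg (by linarith : (0:ℝ) ≤ y - x)]
    exact key x hx y hy h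
  · rw [abs_of_nonpos (by linarith [hmono ⟨hy.1, by linarith [hy.2]⟩ ⟨hx.1, by linarith [hx.2]⟩ h]),
      abs_of_nonpos (by linarith : y - x ≤ 0)]
    have := key y hy x hx h
    linarith

private lemma limsupAux {u : ℕ → EReal} {c : EReal} (h : Tendsto u atTop (𝓝 c)) :
    Tendsto u atTop (𝓝 (limsup u atTop)) := h.limsup_eq ▸ h

theorem compactness_for_wage_functions
    (kbar : ℝ) (hkbar : 0 < kbar)
    (v : ℕ → ℝ → ℝ)
    (hconv : ∀ i, ConvexOn ℝ (Set.Ico 0 kbar) (v i))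
    (hmono : ∀ i, MonotoneOn (v i) (Set.Ico 0 kbar))
    (hnonneg : ∀ i, ∀ k ∈ Set.Ico 0 kbar, 0 ≤ v i k) :
    ∃ (φ : ℕ → ℕ) (k₀ : ℝ) (v₀ : ℝ → EReal),
      StrictMono φ ∧ k₀ ∈ Set.Icc 0 kbar ∧
      (∀ k ∈ Set.Ico 0 kbar,
        Tendsto (fun i => ((v (φ i) k : ℝ) : EReal)) atTop (nhds (v₀ k))) ∧
      (∀ k ∈ Set.Ico 0 k₀, v₀ k ≠ ⊤) ∧
      (∀ k ∈ Set.Ioo k₀ kbar, v₀ k = ⊤) ∧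
      (∀ S : Set ℝ, IsCompact S → S ⊆ Set.Ico 0 k₀ →
        TendstoUniformlyOn (fun i k => v (φ i) k)
          (fun k => (v₀ k).toReal) atTop S) := by
  classical
  -- first extraction: convergence at all rationals
  obtain ⟨a, φ₁, hφ₁, ha⟩ := CompactSpace.tendsto_subseq
      (fun i => (fun n => ((v i ((Denumerable.ofNat ℚ n : ℚ) : ℝ) : ℝ) : EReal)))
  have hcoord : ∀ n : ℕ,
      Tendsto (fun i => ((v (φ₁ i) ((Denumerable.ofNat ℚ n : ℚ) : ℝ) : ℝ) : EReal)) atTop (𝓝 (a n)) :=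
    fun n => ((continuous_apply n).continuousAt.tendsto).comp ha
  have hP : ∀ r : ℚ, ∃ c : EReal,
      Tendsto (fun i => ((v (φ₁ i) (r : ℝ) : ℝ) : EReal)) atTop (𝓝 c) := by
    intro r
    obtain ⟨n, hn⟩ := ((Denumerable.eqv ℚ).symm.surjective r :
      ∃ n : ℕ, (Denumerable.ofNat ℚ n : ℚ) = r)
    exact ⟨a n, by rw [← hn]; exact hcoord n⟩
  choose L hL using hP
  -- the set A and the threshold k₀
  set A : Set ℝ := {x | ∃ r : ℚ, (r:ℝ) = x ∧ 0 ≤ x ∧ x < kbar ∧ L r ≠ ⊤} with hA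
  have hbdd : BddAbove (insert (0:ℝ) A) := by
    refine ⟨kbar, ?_⟩
    rintro y (rfl | ⟨r, rfl, h0, hk, hT⟩)
    · exact hkbar.le
    · exact hk.le
  set k₀ : ℝ := sSup (insert 0 A) with hk₀def
  have hk₀0 : 0 ≤ k₀ := le_csSup hbdd (mem_insert _ _)
  have hk₀kbar : k₀ ≤ kbar := by
    apply csSup_le (insert_nonempty _ _)
    rintro y (rfl | ⟨r, rfl, h0, hk, hT⟩)
    · exact hkbar.le
    · exact hk.le
  -- second extraction: convergence at the point k₀
  obtain ⟨l₀, ψ, hψ, hl₀⟩ := CompactSpace.tendsto_subseq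
      (fun i => ((v (φ₁ i) k₀ : ℝ) : EReal))
  set φ : ℕ → ℕ := φ₁ ∘ ψ with hφdef
  have hφ : StrictMono φ := hφ₁.comp hψ
  have hL' : ∀ r : ℚ, Tendsto (fun i => ((v (φ i) (r : ℝ) : ℝ) : EReal)) atTop (𝓝 (L r)) :=
    fun r => (hL r).comp hψ.tendsto_atTop
  have hl₀' : Tendsto (fun i => ((v (φ i) k₀ : ℝ) : EReal)) atTop (𝓝 l₀) := hl₀
  -- monotonicity and nonnegativity of the limit on rationals
  have hLmono : ∀ q r : ℚ, 0 ≤ (q:ℝ) → (q:ℝ) ≤ (r:ℝ) → (r:ℝ) < kbar → L q ≤ L r := by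
    intro q r h0 hqr hr
    refine le_of_tendsto_of_tendsto' (hL' q) (hL' r) fun i => ?_
    exact_mod_cast hmono (φ i) ⟨h0, lt_of_le_of_lt hqr hr⟩ ⟨h0.trans hqr, hr⟩ hqr
  have hLnn : ∀ q : ℚ, 0 ≤ (q:ℝ) → (q:ℝ) < kbar → (0:EReal) ≤ L q := by
    intro q h0 hk
    refine le_of_tendsto_of_tendsto' tendsto_const_nhds (hL' q) fun i => ?_
    exact_mod_cast hnonneg (φ i) _ ⟨h0, hk⟩
  -- existence of large finite rationals below k₀
  have hAgt : ∀ x : ℝ, 0 ≤ x → x < k₀ →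
      ∃ r : ℚ, x < (r:ℝ) ∧ 0 ≤ (r:ℝ) ∧ (r:ℝ) < kbar ∧ L r ≠ ⊤ := by
    intro x h0 hx
    obtain ⟨y, hy, hxy⟩ := exists_lt_of_lt_csSup (insert_nonempty _ _) hx
    rcases hy with rfl | ⟨r, rfl, h1, h2, h3⟩
    · linarith
    · exact ⟨r, hxy, h1, h2, h3⟩
  -- real convergence at rationals below k₀
  have Hratfin : ∀ q : ℚ, 0 ≤ (q:ℝ) → (q:ℝ) < k₀ →
      ∃ lq : ℝ, Tendsto (fun i => v (φ i) (q:ℝ)) atTop (𝓝 lq) := by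
    intro q h0 hk
    obtain ⟨r, hqr, hr0, hrkbar, hrT⟩ := hAgt (q:ℝ) h0 hk
    have hqkbar : (q:ℝ) < kbar := hqr.trans hrkbar
    have h1 : L q ≤ L r := hLmono q r h0 hqr.le hrkbar
    have hTq : L q ≠ ⊤ := fun h => hrT (top_le_iff.mp (h ▸ h1))
    have hBq : L q ≠ ⊥ := by
      intro h
      have := hLnn q h0 hqkbar
      rw [h] at this
      simp at this
    refine ⟨(L q).toReal, ?_⟩
    have h2 := hL' q
    rw [← EReal.coe_toReal hTq hBq] at h2
    exact EReal.tendsto_coe.mp h2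
  -- uniform Lipschitz bounds on [0, b] for b < k₀
  have HlipOn : ∀ b : ℝ, 0 ≤ b → b < k₀ → ∃ K : ℝ, 0 ≤ K ∧
      ∀ i, ∀ x ∈ Icc 0 b, ∀ y ∈ Icc 0 b, |v (φ i) y - v (φ i) x| ≤ K * |y - x| := by
    intro b hb0 hbk
    obtain ⟨r, hbr, hr0, hrkbar, hrT⟩ := hAgt b hb0 hbk
    have hBr : L r ≠ ⊥ := by
      intro h
      have := hLnn r hr0 hrkbar
      rw [h] at this
      simp at this
    have hconv_r : Tendsto (fun i => v (φ i) (r:ℝ)) atTop (𝓝 (L r).toReal) := by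
      have h2 := hL' r
      rw [← EReal.coe_toReal hrT hBr] at h2
      exact EReal.tendsto_coe.mp h2
    obtain ⟨C, hC⟩ := hconv_r.bddAbove_range
    have hCb : ∀ i, v (φ i) (r:ℝ) ≤ C := fun i => hC (mem_range_self i)
    have hC0 : 0 ≤ C := (hnonneg (φ 0) _ ⟨hr0, hrkbar⟩).trans (hCb 0)
    refine ⟨C / ((r:ℝ) - b), div_nonneg hC0 (by linarith), fun i => ?_⟩
    exact equilip hb0 hbr hrkbar (hconv (φ i)) (hmono (φ i)) (hnonneg (φ i)) (hCb i)
  -- real convergence at all points below k₀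
  have Hfin : ∀ x : ℝ, 0 ≤ x → x < k₀ →
      ∃ lx : ℝ, Tendsto (fun i => v (φ i) x) atTop (𝓝 lx) := by
    intro x hx0 hxk
    set b : ℝ := (x + k₀)/2 with hbdef
    have hxb : x < b := by simp only [hbdef]; linarith
    have hbk : b < k₀ := by simp only [hbdef]; linarith
    have hb0 : 0 ≤ b := hx0.trans hxb.le
    obtain ⟨K, hK0, hlip⟩ := HlipOn b hb0 hbk
    apply cauchySeq_tendsto_of_complete
    rw [Metric.cauchySeq_iff]
    intro ε hε
    set δ : ℝ := ε/(3*(K+1)) with hδdef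
    have hδpos : 0 < δ := by positivity
    obtain ⟨q, hq1, hq2⟩ := exists_rat_btwn (lt_min hxb (by linarith : x < x + δ))
    have hq2b : (q:ℝ) < b := lt_of_lt_of_le hq2 (min_le_left _ _)
    have hq2δ : (q:ℝ) < x + δ := lt_of_lt_of_le hq2 (min_le_right _ _)
    have hq0 : 0 ≤ (q:ℝ) := hx0.trans hq1.le
    obtain ⟨lq, hlq⟩ := Hratfin q hq0 (hq2b.trans hbk)
    obtain ⟨N, hN⟩ := Metric.cauchySeq_iff.mp hlq.cauchySeq (ε/3) (by positivity)
    have hKδ : K * δ ≤ ε/3 := by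
      have h1 : K * δ ≤ (K+1) * δ := by nlinarith
      have h2 : (K+1) * δ = ε/3 := by
        have hK1 : K + 1 ≠ 0 := by linarith
        rw [hδdef]
        field_simp
      linarith
    have hxmem : x ∈ Icc 0 b := ⟨hx0, hxb.le⟩
    have hqmem : (q:ℝ) ∈ Icc 0 b := ⟨hq0, hq2b.le⟩
    have hdistq : ∀ i, dist (v (φ i) x) (v (φ i) (q:ℝ)) ≤ K * δ := by
      intro i
      rw [Real.dist_eq]
      have h3 := hlip i (q:ℝ) hqmem x hxmem
      have h4 : |x - (q:ℝ)| ≤ δ := by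
        rw [abs_of_nonpos (by linarith)]
        linarith
      calc |v (φ i) x - v (φ i) (q:ℝ)| ≤ K * |x - (q:ℝ)| := h3
        _ ≤ K * δ := mul_le_mul_of_nonneg_left h4 hK0
    refine ⟨N, fun m hm n hn => ?_⟩
    have e3 : dist (v (φ m) (q:ℝ)) (v (φ n) (q:ℝ)) < ε/3 := hN m hm n hn
    calc dist (v (φ m) x) (v (φ n) x)
        ≤ dist (v (φ m) x) (v (φ m) (q:ℝ)) + dist (v (φ m) (q:ℝ)) (v (φ n) (q:ℝ))
          + dist (v (φ n) (q:ℝ)) (v (φ n) x) := dist_triangle4 _ _ _ _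
      _ < ε := by
          have := hdistq m
          have h5 : dist (v (φ n) (q:ℝ)) (v (φ n) x) ≤ K * δ := by
            rw [dist_comm]; exact hdistq n
          linarith
  -- divergence above k₀
  have Hgt : ∀ k : ℝ, k₀ < k → k < kbar →
      Tendsto (fun i => ((v (φ i) k : ℝ) : EReal)) atTop (𝓝 ⊤) := by
    intro k hk1 hk2
    obtain ⟨q, hq1, hq2⟩ := exists_rat_btwn hk1
    have hq0 : 0 ≤ (q:ℝ) := hk₀0.trans hq1.le
    have hqkbar : (q:ℝ) < kbar := hq2.trans hk2
    have hLq : L q = ⊤ := by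
      by_contra hT
      have hmem : (q:ℝ) ∈ insert (0:ℝ) A := mem_insert_iff.mpr (Or.inr ⟨q, rfl, hq0, hqkbar, hT⟩)
      have := le_csSup hbdd hmem
      rw [← hk₀def] at this
      linarith
    have htop : Tendsto (fun i => ((v (φ i) (q:ℝ) : ℝ) : EReal)) atTop (𝓝 ⊤) := hLq ▸ hL' q
    refine tendsto_of_tendsto_of_tendsto_of_le_of_le htop tendsto_const_nhds (fun i => ?_)
      (fun i => le_top)
    exact EReal.coe_le_coe_iff.mpr (hmono (φ i) ⟨hq0, hqkbar⟩ ⟨hk₀0.trans hk1.le, hk2⟩ hq2.le)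
  -- uniform convergence on [0,b] for b < k₀
  have Huni : ∀ b : ℝ, 0 ≤ b → b < k₀ →
      TendstoUniformlyOn (fun i k => v (φ i) k)
        (fun k => (limsup (fun i => ((v (φ i) k : ℝ) : EReal)) atTop).toReal) atTop (Icc 0 b) := by
    intro b hb0 hbk
    obtain ⟨K, hK0, hlip⟩ := HlipOn b hb0 hbk
    have HF : ∀ x ∈ Icc (0:ℝ) b, Tendsto (fun i => v (φ i) x) atTop
        (𝓝 ((limsup (fun i => ((v (φ i) x : ℝ) : EReal)) atTop).toReal)) := by
      intro x hx
      obtain ⟨l, hl⟩ := Hfin x hx.1 (lt_of_le_of_lt hx.2 hbk)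
      have h2 : limsup (fun i => ((v (φ i) x : ℝ) : EReal)) atTop = (l : EReal) :=
        (EReal.tendsto_coe.mpr hl).limsup_eq
      rw [h2, EReal.toReal_coe]
      exact hl
    rw [Metric.tendstoUniformlyOn_iff]
    intro ε hε
    set δ : ℝ := ε/(3*(K+1)) with hδdef
    have hδpos : 0 < δ := by positivity
    have hKδ : K * δ ≤ ε/3 := by
      have h1 : K * δ ≤ (K+1) * δ := by nlinarith
      have h2 : (K+1) * δ = ε/3 := by
        have hK1 : K + 1 ≠ 0 := by linarith
        rw [hδdef]
        field_simp
      linarith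
    have hcover : Icc (0:ℝ) b ⊆ ⋃ c : Icc (0:ℝ) b, Metric.ball (c:ℝ) δ := by
      intro x hx
      exact mem_iUnion.2 ⟨⟨x, hx⟩, Metric.mem_ball_self hδpos⟩
    obtain ⟨t, ht⟩ := isCompact_Icc.elim_finite_subcover
      (fun c : Icc (0:ℝ) b => Metric.ball (c:ℝ) δ) (fun c => Metric.isOpen_ball) hcover
    have hev : ∀ᶠ i in atTop, ∀ c ∈ t,
        dist (v (φ i) (c:ℝ)) ((limsup (fun j => ((v (φ j) (c:ℝ) : ℝ) : EReal)) atTop).toReal)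
          < ε/3 := by
      refine (Filter.eventually_all_finset t).2 fun c _ => ?_
      exact Metric.tendsto_nhds.mp (HF (c:ℝ) c.2) (ε/3) (by positivity)
    filter_upwards [hev] with i hi x hx
    obtain ⟨c, hct, hxc⟩ : ∃ c ∈ t, x ∈ Metric.ball (c:ℝ) δ := by
      have := ht hx
      simpa using this
    have hxcd : dist x (c:ℝ) < δ := hxc
    have hF_lip : dist ((limsup (fun j => ((v (φ j) x : ℝ) : EReal)) atTop).toReal)
        ((limsup (fun j => ((v (φ j) (c:ℝ) : ℝ) : EReal)) atTop).toReal) ≤ K * δ := by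
      refine le_of_tendsto ((HF x hx).dist (HF (c:ℝ) c.2)) (Eventually.of_forall fun j => ?_)
      rw [Real.dist_eq]
      calc |v (φ j) x - v (φ j) (c:ℝ)| ≤ K * |x - (c:ℝ)| := hlip j (c:ℝ) c.2 x hx
        _ ≤ K * δ := by
            have : |x - (c:ℝ)| ≤ δ := le_of_lt (by rwa [Real.dist_eq] at hxcd)
            exact mul_le_mul_of_nonneg_left this hK0
    have h3 : dist (v (φ i) (c:ℝ))
        ((limsup (fun j => ((v (φ j) (c:ℝ) : ℝ) : EReal)) atTop).toReal) < ε/3 := hi c hct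
    have h2 : dist (v (φ i) (c:ℝ)) (v (φ i) x) ≤ K * δ := by
      rw [Real.dist_eq]
      calc |v (φ i) (c:ℝ) - v (φ i) x| ≤ K * |(c:ℝ) - x| := hlip i x hx (c:ℝ) c.2
        _ ≤ K * δ := by
            have : |(c:ℝ) - x| ≤ δ := by
              rw [abs_sub_comm]
              exact le_of_lt (by rwa [Real.dist_eq] at hxcd)
            exact mul_le_mul_of_nonneg_left this hK0
    calc dist ((limsup (fun j => ((v (φ j) x : ℝ) : EReal)) atTop).toReal) (v (φ i) x)
        ≤ dist ((limsup (fun j => ((v (φ j) x : ℝ) : EReal)) atTop).toReal)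
            ((limsup (fun j => ((v (φ j) (c:ℝ) : ℝ) : EReal)) atTop).toReal)
          + dist ((limsup (fun j => ((v (φ j) (c:ℝ) : ℝ) : EReal)) atTop).toReal)
              (v (φ i) (c:ℝ))
          + dist (v (φ i) (c:ℝ)) (v (φ i) x) := dist_triangle4 _ _ _ _
      _ < ε := by
          rw [dist_comm ((limsup (fun j => ((v (φ j) (c:ℝ) : ℝ) : EReal)) atTop).toReal)] at *
          linarith
  -- assemble
  refine ⟨φ, k₀, fun k => limsup (fun i => ((v (φ i) k : ℝ) : EReal)) atTop,
    hφ, ⟨hk₀0, hk₀kbar⟩, ?_, ?_, ?_, ?_⟩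
  · intro k hk
    rcases lt_trichotomy k k₀ with h | h | h
    · obtain ⟨l, hl⟩ := Hfin k hk.1 h
      exact limsupAux (EReal.tendsto_coe.mpr hl)
    · subst h
      exact limsupAux hl₀'
    · exact limsupAux (Hgt k h hk.2)
  · intro k hk
    obtain ⟨l, hl⟩ := Hfin k hk.1 hk.2
    have h2 : limsup (fun i => ((v (φ i) k : ℝ) : EReal)) atTop = (l : EReal) :=
      (EReal.tendsto_coe.mpr hl).limsup_eq
    show limsup (fun i => ((v (φ i) k : ℝ) : EReal)) atTop ≠ ⊤
    rw [h2]
    exact EReal.coe_ne_top l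
  · intro k hk
    show limsup (fun i => ((v (φ i) k : ℝ) : EReal)) atTop = ⊤
    exact (Hgt k hk.1 hk.2).limsup_eq
  · intro S hS hSsub
    rcases S.eq_empty_or_nonempty with rfl | hne
    · exact tendstoUniformlyOn_empty
    · have hbS : sSup S ∈ S := hS.sSup_mem hne
      have hbk₀ : sSup S < k₀ := (hSsub hbS).2
      have hb0 : 0 ≤ sSup S := (hSsub hbS).1
      have hsub2 : S ⊆ Icc 0 (sSup S) := fun x hx =>
        ⟨(hSsub hx).1, le_csSup hS.bddAbove hx⟩
      exact (Huni (sSup S) hb0 hbk₀).mono hsub2
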